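/- Let f be a polynomial in n real variables of degree at most 2d lying in the topological interior of the cone Σ_{n,2d} of sums of squares of polynomials of degree at most d. Then there exists a positive definite symmetric N×N real matrix Q (with N = C(d+n, n)) such that f = Xᵀ Q X, where X is the column vector of all monomials in x₁,…,xₙ of degree at most d. Consequently, the Gram spectrahedron of f has affine dimension equal to C(C(d+n,n)+1, 2) − C(2d+n, n). -/

import Mathlib

open Finset Matrix

/-- Split lemma: can take any sub-sum amount. -/
lemma exists_le_sum (m : Fin n →₀ ℕ) :
    ∀ k, k ≤ (m.sum fun _ e => e) → ∃ a b : Fin n →₀ ℕ, a + b = m ∧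
      (a.sum fun _ e => e) = k ∧ (b.sum fun _ e => e) = (m.sum fun _ e => e) - k := by
  intro k
  induction k with
  | zero => intro _; exact ⟨0, m, by simp, by simp, by simp⟩
  | succ k ih =>
    intro hk
    obtain ⟨a, b, hab, ha, hb⟩ := ih (Nat.le_of_succ_le hk)
    have hbpos : (b.sum fun _ e => e) ≠ 0 := by omega
    have hbne : b ≠ 0 := by rintro rfl; simp at hbpos
    obtain ⟨i, hi⟩ : ∃ i, b i ≠ 0 := by
      by_contra h
      push_neg at h
      exact hbne (Finsupp.ext fun i => h i)
    have hsle : Finsupp.single i 1 ≤ b := by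
      intro j
      rcases eq_or_ne j i with rfl | hj
      · simpa using Nat.one_le_iff_ne_zero.mpr hi
      · simp [Finsupp.single_apply, hj.symm]
    have hrec : (b - Finsupp.single i 1) + Finsupp.single i 1 = b :=
      tsub_add_cancel_of_le hsle
    have hsumb : ((b - Finsupp.single i 1).sum fun _ e => e) + 1 = (b.sum fun _ e => e) := by
      conv_rhs => rw [← hrec]
      rw [Finsupp.sum_add_index' (by simp) (by intros; rfl)]
      simp
    refine ⟨a + Finsupp.single i 1, b - Finsupp.single i 1, ?_, ?_, ?_⟩
    · rw [add_assoc, add_comm (Finsupp.single i 1), hrec]; exact hab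
    · rw [Finsupp.sum_add_index' (by simp) (by intros; rfl)]
      simp [ha]
    · omega

lemma exists_split_half {d : ℕ} (m : Fin n →₀ ℕ) (hm : (m.sum fun _ e => e) ≤ 2 * d) :
    ∃ a b : Fin n →₀ ℕ, a + b = m ∧ (a.sum fun _ e => e) ≤ d ∧ (b.sum fun _ e => e) ≤ d := by
  obtain ⟨a, b, hab, ha, hb⟩ := exists_le_sum m (min d (m.sum fun _ e => e)) (min_le_right _ _)
  exact ⟨a, b, hab, by omega, by omega⟩

/-- sum of exponents is additive -/
lemma sum_add_exp (a b : Fin n →₀ ℕ) :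
    ((a + b).sum fun _ e => e) = (a.sum fun _ e => e) + (b.sum fun _ e => e) :=
  Finsupp.sum_add_index' (by simp) (by intros; rfl)

section Gram
variable {n d : ℕ} {N : ℕ} (X : Fin N → (Fin n →₀ ℕ))

/-- Expand a polynomial of degree ≤ d in the monomials X. -/
lemma poly_as_sum (hXinj : Function.Injective X)
    (hXrange : Set.range X = {m : Fin n →₀ ℕ | (m.sum fun _ e => e) ≤ d})
    (q : MvPolynomial (Fin n) ℝ) (hq : q.totalDegree ≤ d) :
    q = ∑ j, MvPolynomial.monomial (X j) (MvPolynomial.coeff (X j) q) := by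
  have hsupp : q.support ⊆ Finset.univ.image X := by
    intro v hv
    have : (v.sum fun _ e => e) ≤ d := le_trans (MvPolynomial.le_totalDegree hv) hq
    have : v ∈ Set.range X := by rw [hXrange]; exact this
    obtain ⟨j, rfl⟩ := this
    exact Finset.mem_image_of_mem X (Finset.mem_univ j)
  conv_lhs => rw [q.as_sum]
  rw [Finset.sum_subset hsupp]
  · rw [Finset.sum_image (fun a _ b _ h => hXinj h)]
  · intro v _ hv
    rw [MvPolynomial.notMem_support_iff.mp hv]
    simp

/-- SOS with degrees ≤ d has a PSD Gram matrix. -/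
lemma sos_gram (hXinj : Function.Injective X)
    (hXrange : Set.range X = {m : Fin n →₀ ℕ | (m.sum fun _ e => e) ≤ d})
    {k : ℕ} (q : Fin k → MvPolynomial (Fin n) ℝ) (hq : ∀ i, (q i).totalDegree ≤ d) :
    ∃ Q : Matrix (Fin N) (Fin N) ℝ, Q.PosSemidef ∧
      (∑ i, q i ^ 2) = ∑ i : Fin N, ∑ j : Fin N,
        MvPolynomial.monomial (X i + X j) (Q i j) := by
  classical
  set A : Matrix (Fin k) (Fin N) ℝ := fun i j => MvPolynomial.coeff (X j) (q i) with hA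
  refine ⟨Aᵀ * A, ?_, ?_⟩
  · have := Matrix.posSemidef_conjTranspose_mul_self A
    have he : Aᴴ = Aᵀ := by ext i j; simp [Matrix.conjTranspose_apply]
    rwa [he] at this
  · have hexp : ∀ i, q i = ∑ j, MvPolynomial.monomial (X j) (A i j) := fun i =>
      poly_as_sum X hXinj hXrange (q i) (hq i)
    have key : ∀ i, q i ^ 2 = ∑ a : Fin N, ∑ b : Fin N,
        MvPolynomial.monomial (X a + X b) (A i a * A i b) := by
      intro i
      rw [sq, hexp i, Finset.sum_mul_sum]
      simp [MvPolynomial.monomial_mul]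
    rw [Finset.sum_congr rfl fun i _ => key i]
    rw [Finset.sum_comm]
    refine Finset.sum_congr rfl fun a _ => ?_
    rw [Finset.sum_comm]
    refine Finset.sum_congr rfl fun b _ => ?_
    rw [Matrix.mul_apply]
    rw [← map_sum (MvPolynomial.monomial (X a + X b))]
    simp [Matrix.transpose_apply, mul_comm]

end Gram

section Main
variable {n d : ℕ}

lemma smul_one_posDef {N : ℕ} {t : ℝ} (ht : 0 < t) :
    (t • (1 : Matrix (Fin N) (Fin N) ℝ)).PosDef := by
  have hherm : (t • (1 : Matrix (Fin N) (Fin N) ℝ)).IsHermitian := by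
    unfold Matrix.IsHermitian
    ext i j
    simp [Matrix.conjTranspose_apply, Matrix.one_apply, eq_comm]
  refine Matrix.PosDef.of_dotProduct_mulVec_pos hherm fun x hx => ?_
  have : (t • (1 : Matrix (Fin N) (Fin N) ℝ)) *ᵥ x = t • x := by
    simp [Matrix.smul_mulVec]
  rw [this]
  simp only [star_trivial, dotProduct_smul]
  have h1 : 0 ≤ x ⬝ᵥ x := Finset.sum_nonneg fun i _ => mul_self_nonneg _
  have h2 : x ⬝ᵥ x ≠ 0 := fun h => hx (dotProduct_self_eq_zero.mp h)
  exact smul_pos ht (lt_of_le_of_ne h1 (Ne.symm h2))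

theorem part1 (n d : ℕ)
    (X : Fin ((d + n).choose n) → (Fin n →₀ ℕ))
    (hXinj : Function.Injective X)
    (hXrange : Set.range X = {m : Fin n →₀ ℕ | (m.sum fun _ e => e) ≤ d})
    (Y : Fin ((2 * d + n).choose n) → (Fin n →₀ ℕ))
    (hYinj : Function.Injective Y)
    (hYrange : Set.range Y = {m : Fin n →₀ ℕ | (m.sum fun _ e => e) ≤ 2 * d})
    (c : Fin ((2 * d + n).choose n) → ℝ)
    (hc : c ∈ interior {p : Fin ((2 * d + n).choose n) → ℝ |
          ∃ (k : ℕ) (q : Fin k → MvPolynomial (Fin n) ℝ),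
            (∀ i, (q i).totalDegree ≤ d) ∧
            (∑ j, MvPolynomial.monomial (Y j) (p j)) = ∑ i, q i ^ 2}) :
    ∃ Q : Matrix (Fin ((d + n).choose n)) (Fin ((d + n).choose n)) ℝ,
        Q.PosDef ∧
        (∑ j, MvPolynomial.monomial (Y j) (c j)) =
          ∑ i : Fin ((d + n).choose n), ∑ j : Fin ((d + n).choose n),
            MvPolynomial.monomial (X i + X j) (Q i j) := by
  classical
  have hXdeg : ∀ i, ((X i).sum fun _ e => e) ≤ d := fun i => by
    have : X i ∈ Set.range X := Set.mem_range_self i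
    rw [hXrange] at this
    exact this
  have hgmem : ∀ i : Fin ((d + n).choose n), (X i + X i) ∈ Set.range Y := by
    intro i
    rw [hYrange]
    have h1 := sum_add_exp (X i) (X i)
    have h2 := hXdeg i
    simp only [Set.mem_setOf_eq]
    omega
  choose g hg using hgmem
  set e : Fin ((2 * d + n).choose n) → ℝ :=
    fun j => ((Finset.univ.filter fun i => g i = j).card : ℝ) with he
  have hge : (∑ j, MvPolynomial.monomial (Y j) (e j)) =
      ∑ i : Fin ((d + n).choose n), MvPolynomial.monomial (X i + X i) (1 : ℝ) := by
    rw [← Finset.sum_fiberwise Finset.univ g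
      (fun i => MvPolynomial.monomial (X i + X i) (1 : ℝ))]
    refine Finset.sum_congr rfl fun j _ => ?_
    have h1 : e j = ∑ _i ∈ Finset.univ.filter fun i => g i = j, (1 : ℝ) := by simp [he]
    rw [h1, map_sum]
    refine Finset.sum_congr rfl fun i hi => ?_
    rw [Finset.mem_filter] at hi
    rw [← hi.2, hg i]
  rw [mem_interior_iff_mem_nhds, Metric.mem_nhds_iff] at hc
  obtain ⟨ε, hε, hball⟩ := hc
  set t : ℝ := ε / (2 * (‖e‖ + 1)) with htdef
  have hnorm : (0:ℝ) < ‖e‖ + 1 := by positivity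
  have ht : 0 < t := by positivity
  have hmem : c - t • e ∈ {p : Fin ((2 * d + n).choose n) → ℝ |
      ∃ (k : ℕ) (q : Fin k → MvPolynomial (Fin n) ℝ),
        (∀ i, (q i).totalDegree ≤ d) ∧
        (∑ j, MvPolynomial.monomial (Y j) (p j)) = ∑ i, q i ^ 2} := by
    apply hball
    rw [Metric.mem_ball, dist_eq_norm, sub_sub_cancel_left, norm_neg, norm_smul,
      Real.norm_eq_abs, abs_of_pos ht]
    have heq : t * (‖e‖ + 1) = ε / 2 := by
      rw [htdef]
      field_simp
    calc t * ‖e‖ ≤ t * (‖e‖ + 1) := by nlinarith [norm_nonneg e]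
    _ = ε / 2 := heq
    _ < ε := by linarith
  obtain ⟨k, q, hqdeg, hqsum⟩ := hmem
  obtain ⟨Q', hQ'psd, hQ'⟩ := sos_gram X hXinj hXrange q hqdeg
  refine ⟨Q' + t • 1, Matrix.PosDef.posSemidef_add hQ'psd (smul_one_posDef ht), ?_⟩
  have hsplit : (∑ j, MvPolynomial.monomial (Y j) (c j)) =
      (∑ j, MvPolynomial.monomial (Y j) ((c - t • e) j)) +
      t • ∑ j, MvPolynomial.monomial (Y j) (e j) := by
    rw [Finset.smul_sum, ← Finset.sum_add_distrib]
    refine Finset.sum_congr rfl fun j _ => ?_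
    rw [MvPolynomial.smul_monomial, ← map_add]
    congr 1
    simp
  rw [hsplit, hqsum, hQ', hge]
  have hent : ∀ i j : Fin ((d + n).choose n),
      (Q' + t • (1 : Matrix (Fin ((d + n).choose n)) (Fin ((d + n).choose n)) ℝ)) i j
        = Q' i j + (if i = j then t else 0) := by
    intro i j
    simp [Matrix.add_apply, Matrix.one_apply, mul_ite]
  simp only [hent, map_add, Finset.sum_add_distrib]
  congr 1
  rw [Finset.smul_sum]
  refine Finset.sum_congr rfl fun i _ => ?_
  rw [MvPolynomial.smul_monomial, smul_eq_mul, mul_one]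
  rw [Finset.sum_eq_single_of_mem i (Finset.mem_univ i)]
  · simp
  · intro j _ hj
    simp [Ne.symm hj]

end Main

section Part2
variable {n : ℕ}

/-- The Gram linear map. -/
noncomputable def LGram {N : ℕ} (X : Fin N → (Fin n →₀ ℕ)) :
    Matrix (Fin N) (Fin N) ℝ →ₗ[ℝ] MvPolynomial (Fin n) ℝ where
  toFun Q := ∑ i, ∑ j, MvPolynomial.monomial (X i + X j) (Q i j)
  map_add' Q R := by
    simp only [Matrix.add_apply, map_add, Finset.sum_add_distrib]
  map_smul' r Q := by
    simp only [Matrix.smul_apply, smul_eq_mul, RingHom.id_apply, Finset.smul_sum,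
      MvPolynomial.smul_monomial]

lemma LGram_apply {N : ℕ} (X : Fin N → (Fin n →₀ ℕ)) (Q : Matrix (Fin N) (Fin N) ℝ) :
    LGram X Q = ∑ i, ∑ j, MvPolynomial.monomial (X i + X j) (Q i j) := rfl

/-- The submodule of symmetric matrices. -/
def symSub (N : ℕ) : Submodule ℝ (Matrix (Fin N) (Fin N) ℝ) where
  carrier := {Q | Qᵀ = Q}
  add_mem' := by
    intro a b ha hb
    simp only [Set.mem_setOf_eq] at *
    rw [Matrix.transpose_add, ha, hb]
  zero_mem' := by simp
  smul_mem' := by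
    intro r a ha
    simp only [Set.mem_setOf_eq] at *
    rw [Matrix.transpose_smul, ha]

lemma mem_symSub {N : ℕ} {Q : Matrix (Fin N) (Fin N) ℝ} : Q ∈ symSub N ↔ Qᵀ = Q :=
  Iff.rfl

/-- Equivalence with functions on ordered pairs. -/
noncomputable def symEquiv (N : ℕ) :
    (symSub N) ≃ₗ[ℝ] ({p : Fin N × Fin N // p.1 ≤ p.2} → ℝ) where
  toFun Q p := (Q : Matrix (Fin N) (Fin N) ℝ) p.1.1 p.1.2
  map_add' Q R := rfl
  map_smul' r Q := rfl
  invFun f := ⟨fun i j => if h : i ≤ j then f ⟨(i, j), h⟩ else f ⟨(j, i), le_of_not_ge h⟩, by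
    apply mem_symSub.mpr
    ext i j
    change (if h : j ≤ i then f ⟨(j, i), h⟩ else f ⟨(i, j), le_of_not_ge h⟩) = _
    rcases le_or_gt i j with h | h
    · rw [dif_pos h]
      by_cases h' : j ≤ i
      · have : i = j := le_antisymm h h'
        subst this
        rw [dif_pos le_rfl]
      · rw [dif_neg h']
    · rw [dif_neg (not_le.mpr h), dif_pos h.le]⟩
  left_inv Q := by
    ext i j
    dsimp only
    split_ifs with h
    · rfl
    · exact congrFun (congrFun Q.2 i) j
  right_inv f := by
    ext p
    dsimp only
    rw [dif_pos p.2]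

lemma finrank_symSub (N : ℕ) :
    Module.finrank ℝ (symSub N) = (N + 1).choose 2 := by
  classical
  rw [LinearEquiv.finrank_eq (symEquiv N), Module.finrank_fintype_fun_eq_card]
  -- count pairs i ≤ j
  have e : {p : Fin N × Fin N // p.1 ≤ p.2} ≃ (Σ j : Fin N, {i : Fin N // i ≤ j}) :=
    { toFun := fun p => ⟨p.1.2, ⟨p.1.1, p.2⟩⟩
      invFun := fun s => ⟨(s.2.1, s.1), s.2.2⟩
      left_inv := fun p => rfl
      right_inv := fun s => rfl }
  rw [Fintype.card_congr e, Fintype.card_sigma]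
  have hcard : ∀ j : Fin N, Fintype.card {i : Fin N // i ≤ j} = (j : ℕ) + 1 := by
    intro j
    rw [Fintype.card_subtype]
    have : Finset.univ.filter (fun i : Fin N => i ≤ j) = Finset.Iic j := by
      ext i; simp
    rw [this]
    exact Fin.card_Iic j
  simp only [hcard]
  rw [Fin.sum_univ_eq_sum_range (fun k => k + 1)]
  have h2 : (∑ k ∈ Finset.range N, (k + 1)) * 2 = (N + 1) * N := by
    rw [Finset.sum_add_distrib, Finset.sum_const, Finset.card_range, add_mul,
      Finset.sum_range_id_mul_two]
    cases N with
    | zero => simp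
    | succ m => simp [Nat.succ_sub_one]; ring
  have h3 : (N + 1).choose 2 = (N + 1) * N / 2 := by
    rw [Nat.choose_two_right]
    simp
  omega

lemma transpose_stdBasis {N : ℕ} (a b : Fin N) (r : ℝ) :
    (Matrix.single a b r)ᵀ = Matrix.single b a r := by
  ext i j
  simp [Matrix.transpose_apply, Matrix.single, and_comm]

lemma LGram_stdBasis {N : ℕ} (X : Fin N → (Fin n →₀ ℕ)) (a b : Fin N) (r : ℝ) :
    LGram X (Matrix.single a b r) = MvPolynomial.monomial (X a + X b) r := by
  classical
  rw [LGram_apply]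
  rw [Finset.sum_eq_single_of_mem a (Finset.mem_univ a)]
  · rw [Finset.sum_eq_single_of_mem b (Finset.mem_univ b)]
    · rw [Matrix.single, Matrix.of_apply]
      simp
    · intro j _ hj
      rw [Matrix.single, Matrix.of_apply]
      simp [hj.symm]
  · intro i _ hi
    apply Finset.sum_eq_zero
    intro j _
    rw [Matrix.single, Matrix.of_apply]
    simp [hi.symm]

variable {d : ℕ} {N M : ℕ}

/-- The span of the monomials of degree at most 2d. -/
noncomputable def Wspan (Y : Fin M → (Fin n →₀ ℕ)) : Submodule ℝ (MvPolynomial (Fin n) ℝ) :=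
  Submodule.span ℝ (Set.range fun j => MvPolynomial.monomial (Y j) (1 : ℝ))

lemma finrank_Wspan (Y : Fin M → (Fin n →₀ ℕ)) (hYinj : Function.Injective Y) :
    Module.finrank ℝ (Wspan Y) = M := by
  have hli : LinearIndependent ℝ (fun j => MvPolynomial.monomial (Y j) (1 : ℝ)) := by
    have := (MvPolynomial.basisMonomials (Fin n) ℝ).linearIndependent
    have h2 := this.comp Y hYinj
    rwa [show ((MvPolynomial.basisMonomials (Fin n) ℝ) ∘ Y)
      = fun j => MvPolynomial.monomial (Y j) (1 : ℝ) by
        funext j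
        rw [Function.comp_apply]
        rw [show ((MvPolynomial.basisMonomials (Fin n) ℝ) (Y j))
          = MvPolynomial.monomial (Y j) (1:ℝ) from congrFun
            (MvPolynomial.coe_basisMonomials (Fin n) ℝ) (Y j)]] at h2
  rw [Wspan, finrank_span_eq_card hli, Fintype.card_fin]

/-- range of LGram restricted to symmetric matrices equals Wspan -/
lemma range_LGram_eq (X : Fin N → (Fin n →₀ ℕ))
    (hXinj : Function.Injective X)
    (hXrange : Set.range X = {m : Fin n →₀ ℕ | (m.sum fun _ e => e) ≤ d})
    (Y : Fin M → (Fin n →₀ ℕ))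
    (hYrange : Set.range Y = {m : Fin n →₀ ℕ | (m.sum fun _ e => e) ≤ 2 * d}) :
    LinearMap.range ((LGram X).domRestrict (symSub N)) = Wspan Y := by
  have hXdeg : ∀ i, ((X i).sum fun _ e => e) ≤ d := fun i => by
    have : X i ∈ Set.range X := Set.mem_range_self i
    rw [hXrange] at this
    exact this
  apply le_antisymm
  · rintro _ ⟨⟨Q, hQ⟩, rfl⟩
    rw [LinearMap.domRestrict_apply, LGram_apply]
    apply Submodule.sum_mem
    intro i _
    apply Submodule.sum_mem
    intro j _
    have hmem : (X i + X j) ∈ Set.range Y := by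
      rw [hYrange]
      have h1 := sum_add_exp (X i) (X j)
      have h2 := hXdeg i
      have h3 := hXdeg j
      simp only [Set.mem_setOf_eq]
      omega
    obtain ⟨k, hk⟩ := hmem
    have : MvPolynomial.monomial (X i + X j) (Q i j)
        = Q i j • MvPolynomial.monomial (Y k) (1 : ℝ) := by
      rw [MvPolynomial.smul_monomial, hk, smul_eq_mul, mul_one]
    rw [this]
    exact Submodule.smul_mem _ _ (Submodule.subset_span ⟨k, rfl⟩)
  · rw [Wspan, Submodule.span_le]
    rintro _ ⟨k, rfl⟩
    have hYk : ((Y k).sum fun _ e => e) ≤ 2 * d := by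
      have : Y k ∈ Set.range Y := Set.mem_range_self k
      rw [hYrange] at this
      exact this
    obtain ⟨a, b, hab, ha, hb⟩ := exists_split_half (Y k) hYk
    obtain ⟨i₁, hi₁⟩ : a ∈ Set.range X := by rw [hXrange]; exact ha
    obtain ⟨i₂, hi₂⟩ : b ∈ Set.range X := by rw [hXrange]; exact hb
    set B : Matrix (Fin N) (Fin N) ℝ :=
      (1/2 : ℝ) • (Matrix.single i₁ i₂ 1 + Matrix.single i₂ i₁ 1) with hB
    have hBsym : B ∈ symSub N := by
      rw [mem_symSub, hB, Matrix.transpose_smul, Matrix.transpose_add,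
        transpose_stdBasis, transpose_stdBasis, add_comm]
    refine ⟨⟨B, hBsym⟩, ?_⟩
    show LGram X B = _
    rw [hB, _root_.map_smul, map_add, LGram_stdBasis, LGram_stdBasis,
      hi₁, hi₂, add_comm b a, hab]
    rw [← map_add, MvPolynomial.smul_monomial]
    norm_num

end Part2

section Analysis

lemma quad_continuous {N : ℕ} (A : Matrix (Fin N) (Fin N) ℝ) :
    Continuous fun x : Fin N → ℝ => x ⬝ᵥ (A *ᵥ x) := by
  unfold dotProduct Matrix.mulVec
  apply continuous_finset_sum
  intro i _
  exact (continuous_apply i).mul (continuous_finset_sum _ fun j _ =>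
    (continuous_const.mul (continuous_apply j)))

lemma quad_smul {N : ℕ} (A : Matrix (Fin N) (Fin N) ℝ) (a : ℝ) (x : Fin N → ℝ) :
    (a • x) ⬝ᵥ (A *ᵥ (a • x)) = a * a * (x ⬝ᵥ (A *ᵥ x)) := by
  rw [Matrix.mulVec_smul, smul_dotProduct, dotProduct_smul]
  simp [smul_eq_mul]
  ring

lemma dot_self_nonneg {N : ℕ} (x : Fin N → ℝ) : 0 ≤ x ⬝ᵥ x :=
  Finset.sum_nonneg fun i _ => mul_self_nonneg _

lemma sq_le_dot {N : ℕ} (x : Fin N → ℝ) (i : Fin N) : x i * x i ≤ x ⬝ᵥ x :=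
  Finset.single_le_sum (f := fun k => x k * x k) (fun k _ => mul_self_nonneg _)
    (Finset.mem_univ i)

lemma quad_lower {N : ℕ} {Q₀ : Matrix (Fin N) (Fin N) ℝ} (hQ₀ : Q₀.PosDef) :
    ∃ c : ℝ, 0 < c ∧ ∀ x : Fin N → ℝ, c * (x ⬝ᵥ x) ≤ x ⬝ᵥ (Q₀ *ᵥ x) := by
  rcases Nat.eq_zero_or_pos N with hN | hN
  · subst hN
    refine ⟨1, one_pos, fun x => ?_⟩
    have hx : x = 0 := funext fun i => absurd i.2 (by omega)
    subst hx
    simp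
  · set K : Set (Fin N → ℝ) := {x | x ⬝ᵥ x = 1} with hK
    have hcont : Continuous fun x : Fin N → ℝ => x ⬝ᵥ x := by
      have := quad_continuous (1 : Matrix (Fin N) (Fin N) ℝ)
      simpa using this
    have hclosed : IsClosed K := isClosed_singleton.preimage hcont
    have hbdd : Bornology.IsBounded K := by
      apply (Metric.isBounded_closedBall (x := (0 : Fin N → ℝ)) (r := 1)).subset
      intro x hx
      rw [Metric.mem_closedBall, dist_zero_right]
      rw [pi_norm_le_iff_of_nonneg (by norm_num)]
      intro i
      rw [Real.norm_eq_abs, abs_le_one_iff_mul_self_le_one]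
      exact le_trans (sq_le_dot x i) (le_of_eq hx)
    have hKcomp : IsCompact K := Metric.isCompact_of_isClosed_isBounded hclosed hbdd
    have hKne : K.Nonempty := by
      refine ⟨Pi.single ⟨0, hN⟩ 1, ?_⟩
      show (Pi.single (⟨0, hN⟩ : Fin N) (1:ℝ)) ⬝ᵥ (Pi.single ⟨0, hN⟩ 1) = 1
      unfold dotProduct
      rw [Finset.sum_eq_single_of_mem (⟨0, hN⟩ : Fin N) (Finset.mem_univ _)]
      · simp
      · intro j _ hj
        simp [Pi.single_apply, hj]
    obtain ⟨z, hzK, hz⟩ := hKcomp.exists_isMinOn hKne (quad_continuous Q₀).continuousOn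
    have hzmin := isMinOn_iff.mp hz
    have hz0 : z ≠ 0 := by
      intro h
      rw [hK] at hzK
      simp only [Set.mem_setOf_eq, h] at hzK
      simp at hzK
    have hc : 0 < z ⬝ᵥ (Q₀ *ᵥ z) := by have := hQ₀.dotProduct_mulVec_pos hz0; rwa [star_trivial] at this
    refine ⟨z ⬝ᵥ (Q₀ *ᵥ z), hc, fun x => ?_⟩
    rcases eq_or_ne x 0 with rfl | hx
    · simp
    · have hs : 0 < x ⬝ᵥ x := by
        rcases lt_or_eq_of_le (dot_self_nonneg x) with h | h
        · exact h
        · exact absurd (dotProduct_self_eq_zero.mp h.symm) hx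
      set a : ℝ := (Real.sqrt (x ⬝ᵥ x))⁻¹ with ha
      have hsqrt : Real.sqrt (x ⬝ᵥ x) * Real.sqrt (x ⬝ᵥ x) = x ⬝ᵥ x :=
        Real.mul_self_sqrt hs.le
      have hsqrtpos : 0 < Real.sqrt (x ⬝ᵥ x) := Real.sqrt_pos.mpr hs
      have haa : a * a * (x ⬝ᵥ x) = 1 := by
        rw [ha, ← mul_inv, hsqrt]
        field_simp
      have huK : (a • x) ∈ K := by
        rw [hK]
        show (a • x) ⬝ᵥ (a • x) = 1
        rw [smul_dotProduct, dotProduct_smul, smul_eq_mul, smul_eq_mul,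
          ← mul_assoc]
        exact haa
      have h1 : z ⬝ᵥ (Q₀ *ᵥ z) ≤ a * a * (x ⬝ᵥ (Q₀ *ᵥ x)) := by
        rw [← quad_smul]
        exact hzmin _ huK
      have h2 : (z ⬝ᵥ (Q₀ *ᵥ z)) * (x ⬝ᵥ x) ≤ (a * a * (x ⬝ᵥ x)) * (x ⬝ᵥ (Q₀ *ᵥ x)) := by
        calc (z ⬝ᵥ (Q₀ *ᵥ z)) * (x ⬝ᵥ x) ≤ (a * a * (x ⬝ᵥ (Q₀ *ᵥ x))) * (x ⬝ᵥ x) :=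
          mul_le_mul_of_nonneg_right h1 hs.le
        _ = (a * a * (x ⬝ᵥ x)) * (x ⬝ᵥ (Q₀ *ᵥ x)) := by ring
      rw [haa, one_mul] at h2
      exact h2

lemma quad_upper {N : ℕ} (P : Matrix (Fin N) (Fin N) ℝ) (x : Fin N → ℝ) :
    |x ⬝ᵥ (P *ᵥ x)| ≤ (∑ i, ∑ j, |P i j|) * (x ⬝ᵥ x) := by
  have hxx : ∀ i j, |x i| * |x j| ≤ x ⬝ᵥ x := by
    intro i j
    nlinarith [sq_nonneg (|x i| - |x j|), sq_le_dot x i, sq_le_dot x j,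
      abs_mul_abs_self (x i), abs_mul_abs_self (x j)]
  have hexp : x ⬝ᵥ (P *ᵥ x) = ∑ i, ∑ j, x i * (P i j * x j) := by
    unfold dotProduct Matrix.mulVec
    exact Finset.sum_congr rfl fun i _ => Finset.mul_sum _ _ _
  rw [hexp, Finset.sum_mul]
  calc |∑ i, ∑ j, x i * (P i j * x j)| ≤ ∑ i, |∑ j, x i * (P i j * x j)| :=
        Finset.abs_sum_le_sum_abs _ _
  _ ≤ ∑ i, ∑ j, |x i * (P i j * x j)| :=
        Finset.sum_le_sum fun i _ => Finset.abs_sum_le_sum_abs _ _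
  _ ≤ ∑ i, ∑ j, |P i j| * (x ⬝ᵥ x) := by
        refine Finset.sum_le_sum fun i _ => Finset.sum_le_sum fun j _ => ?_
        rw [abs_mul, abs_mul, ← mul_assoc, mul_comm (|x i|) (|P i j|), mul_assoc]
        exact mul_le_mul_of_nonneg_left (hxx i j) (abs_nonneg _)
  _ = ∑ i, (∑ j, |P i j|) * (x ⬝ᵥ x) := by
        exact Finset.sum_congr rfl fun i _ => (Finset.sum_mul _ _ _).symm

lemma herm_of_symm {N : ℕ} {P : Matrix (Fin N) (Fin N) ℝ} (hP : Pᵀ = P) :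
    P.IsHermitian := by
  unfold Matrix.IsHermitian
  ext i j
  rw [Matrix.conjTranspose_apply, star_trivial]
  exact congrFun (congrFun hP i) j

lemma perturb {N : ℕ} {Q₀ P : Matrix (Fin N) (Fin N) ℝ} (hQ₀ : Q₀.PosDef) (hP : Pᵀ = P) :
    ∃ t : ℝ, 0 < t ∧ (Q₀ + t • P).PosSemidef := by
  obtain ⟨c, hc, hlow⟩ := quad_lower hQ₀
  set C : ℝ := ∑ i, ∑ j, |P i j| with hCdef
  have hC0 : 0 ≤ C := Finset.sum_nonneg fun i _ => Finset.sum_nonneg fun j _ => abs_nonneg _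
  refine ⟨c / (C + 1), by positivity, Matrix.PosSemidef.of_dotProduct_mulVec_nonneg ?_ ?_⟩
  · apply hQ₀.isHermitian.add
    apply herm_of_symm
    rw [Matrix.transpose_smul, hP]
  · intro x
    set t : ℝ := c / (C + 1) with htdef
    have ht : 0 < t := by positivity
    rw [star_trivial, Matrix.add_mulVec, dotProduct_add, Matrix.smul_mulVec,
      dotProduct_smul, smul_eq_mul]
    have h1 := hlow x
    have h2 := quad_upper P x
    have hS := dot_self_nonneg x
    have htC : t * (C + 1) = c := by
      rw [htdef]
      field_simp
    nlinarith [abs_nonneg (x ⬝ᵥ (P *ᵥ x)), neg_abs_le (x ⬝ᵥ (P *ᵥ x)),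
      mul_le_mul_of_nonneg_left h2 ht.le]

end Analysis

section Final
variable {n d N M : ℕ}

lemma symm_of_psd {P : Matrix (Fin N) (Fin N) ℝ} (h : P.PosSemidef) : Pᵀ = P := by
  ext i j
  have := congrFun (congrFun h.isHermitian i) j
  rw [Matrix.conjTranspose_apply, star_trivial] at this
  exact this

set_option synthInstance.maxHeartbeats 1000000 in
theorem part2 (n d : ℕ)
    (X : Fin ((d + n).choose n) → (Fin n →₀ ℕ))
    (hXinj : Function.Injective X)
    (hXrange : Set.range X = {m : Fin n →₀ ℕ | (m.sum fun _ e => e) ≤ d})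
    (Y : Fin ((2 * d + n).choose n) → (Fin n →₀ ℕ))
    (hYinj : Function.Injective Y)
    (hYrange : Set.range Y = {m : Fin n →₀ ℕ | (m.sum fun _ e => e) ≤ 2 * d})
    (c : Fin ((2 * d + n).choose n) → ℝ)
    (Q₀ : Matrix (Fin ((d + n).choose n)) (Fin ((d + n).choose n)) ℝ)
    (hQ₀pd : Q₀.PosDef)
    (hQ₀f : (∑ j, MvPolynomial.monomial (Y j) (c j)) = LGram X Q₀) :
    Module.finrank ℝ
      (affineSpan ℝ
        {Q : Matrix (Fin ((d + n).choose n)) (Fin ((d + n).choose n)) ℝ |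
          Q.PosSemidef ∧
          (∑ j, MvPolynomial.monomial (Y j) (c j)) =
            ∑ i : Fin ((d + n).choose n), ∑ j : Fin ((d + n).choose n),
              MvPolynomial.monomial (X i + X j) (Q i j)}).direction =
      ((d + n).choose n + 1).choose 2 - (2 * d + n).choose n := by
  classical
  set f : MvPolynomial (Fin n) ℝ := ∑ j, MvPolynomial.monomial (Y j) (c j) with hf
  set S : Set (Matrix (Fin ((d + n).choose n)) (Fin ((d + n).choose n)) ℝ) :=
    {Q | Q.PosSemidef ∧ f = ∑ i : Fin ((d + n).choose n), ∑ j : Fin ((d + n).choose n),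
      MvPolynomial.monomial (X i + X j) (Q i j)} with hS
  have hSL : ∀ Q, Q ∈ S ↔ (Q.PosSemidef ∧ f = LGram X Q) := fun Q => Iff.rfl
  set L' := (LGram X).domRestrict (symSub ((d + n).choose n)) with hL'
  set Kmat := Submodule.map (symSub ((d + n).choose n)).subtype (LinearMap.ker L') with hKmat
  have hmemK : ∀ P, P ∈ Kmat ↔ (Pᵀ = P ∧ LGram X P = 0) := by
    intro P
    constructor
    · rintro ⟨⟨Q, hQ⟩, hker, rfl⟩
      refine ⟨hQ, ?_⟩
      rw [SetLike.mem_coe, LinearMap.mem_ker, hL', LinearMap.domRestrict_apply] at hker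
      exact hker
    · rintro ⟨h1, h2⟩
      exact ⟨⟨P, h1⟩, LinearMap.mem_ker.mpr (by
        rw [hL', LinearMap.domRestrict_apply]; exact h2), rfl⟩
  have hQ₀S : Q₀ ∈ S := ⟨hQ₀pd.posSemidef, hQ₀f⟩
  have hspan : vectorSpan ℝ S = Kmat := by
    apply le_antisymm
    · rw [vectorSpan, Submodule.span_le]
      rintro v ⟨Q₁, hQ₁, Q₂, hQ₂, rfl⟩
      rw [SetLike.mem_coe, hmemK]
      constructor
      · show (Q₁ - Q₂)ᵀ = Q₁ - Q₂
        rw [Matrix.transpose_sub, symm_of_psd hQ₁.1, symm_of_psd hQ₂.1]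
      · show LGram X (Q₁ - Q₂) = 0
        rw [map_sub, ← (hSL Q₁).mp hQ₁ |>.2, ← (hSL Q₂).mp hQ₂ |>.2, sub_self]
    · intro P hP
      rw [hmemK] at hP
      obtain ⟨hPsym, hP0⟩ := hP
      obtain ⟨t, ht, hpsd⟩ := perturb hQ₀pd hPsym
      have hmem2 : Q₀ + t • P ∈ S := by
        rw [hSL]
        refine ⟨hpsd, ?_⟩
        rw [map_add, _root_.map_smul, hP0, smul_zero, add_zero]
        exact hQ₀f
      have hsub : (Q₀ + t • P) -ᵥ Q₀ ∈ vectorSpan ℝ S := vsub_mem_vectorSpan ℝ hmem2 hQ₀S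
      have heq : (Q₀ + t • P) -ᵥ Q₀ = t • P := by
        show Q₀ + t • P - Q₀ = t • P
        abel
      rw [heq] at hsub
      have := Submodule.smul_mem (vectorSpan ℝ S) t⁻¹ hsub
      rwa [smul_smul, inv_mul_cancel₀ ht.ne', one_smul] at this
  have hdir : (affineSpan ℝ S).direction = vectorSpan ℝ S := direction_affineSpan ℝ S
  rw [hdir, hspan]
  have hrk : Module.finrank ℝ Kmat = Module.finrank ℝ (LinearMap.ker L') :=
    (Submodule.equivMapOfInjective (symSub ((d + n).choose n)).subtype
      (Submodule.injective_subtype _) (LinearMap.ker L')).finrank_eq.symm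
  rw [hrk]
  have hrn := LinearMap.finrank_range_add_finrank_ker L'
  have hrange : LinearMap.range L' = Wspan Y := by
    rw [hL']
    exact range_LGram_eq X hXinj hXrange Y hYrange
  rw [hrange, finrank_Wspan Y hYinj] at hrn
  have hsym := finrank_symSub ((d + n).choose n)
  rw [hsym] at hrn
  omega

end Final

/-- If `f` (a polynomial in `n` variables of degree at most `2d`, represented by
its coefficient vector `c` relative to an enumeration `Y` of all monomials of degree at most
`2d`) lies in the topological interior of the cone `Σ_{n,2d}` of sums of squares of polynomials
of degree at most `d`, then `f` admits a positive definite symmetric Gram matrix `Q` of size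
`N = C(d+n, n)` (so `f = Xᵀ Q X`, with `X` an enumeration of the monomials of degree at most
`d`), and consequently the affine dimension of the Gram spectrahedron of `f` equals
`C(C(d+n,n)+1, 2) − C(2d+n, n)`. -/
theorem stmt_1 (n d : ℕ)
    (X : Fin ((d + n).choose n) → (Fin n →₀ ℕ))
    (hXinj : Function.Injective X)
    (hXrange : Set.range X = {m : Fin n →₀ ℕ | (m.sum fun _ e => e) ≤ d})
    (Y : Fin ((2 * d + n).choose n) → (Fin n →₀ ℕ))
    (hYinj : Function.Injective Y)
    (hYrange : Set.range Y = {m : Fin n →₀ ℕ | (m.sum fun _ e => e) ≤ 2 * d})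
    (c : Fin ((2 * d + n).choose n) → ℝ)
    (hc : c ∈ interior {p : Fin ((2 * d + n).choose n) → ℝ |
          ∃ (k : ℕ) (q : Fin k → MvPolynomial (Fin n) ℝ),
            (∀ i, (q i).totalDegree ≤ d) ∧
            (∑ j, MvPolynomial.monomial (Y j) (p j)) = ∑ i, q i ^ 2}) :
    (∃ Q : Matrix (Fin ((d + n).choose n)) (Fin ((d + n).choose n)) ℝ,
        Q.PosDef ∧
        (∑ j, MvPolynomial.monomial (Y j) (c j)) =
          ∑ i : Fin ((d + n).choose n), ∑ j : Fin ((d + n).choose n),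
            MvPolynomial.monomial (X i + X j) (Q i j)) ∧
    Module.finrank ℝ
      (affineSpan ℝ
        {Q : Matrix (Fin ((d + n).choose n)) (Fin ((d + n).choose n)) ℝ |
          Q.PosSemidef ∧
          (∑ j, MvPolynomial.monomial (Y j) (c j)) =
            ∑ i : Fin ((d + n).choose n), ∑ j : Fin ((d + n).choose n),
              MvPolynomial.monomial (X i + X j) (Q i j)}).direction =
      ((d + n).choose n + 1).choose 2 - (2 * d + n).choose n := by
  obtain ⟨Q₀, hpd, hgram⟩ := part1 n d X hXinj hXrange Y hYinj hYrange c hc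
  exact ⟨⟨Q₀, hpd, hgram⟩, part2 n d X hXinj hXrange Y hYinj hYrange c Q₀ hpd hgram⟩
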